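/- Let M, K be nonsingular real m×m matrices and β > 0. The 3m×3m saddle-point matrix A = [[2βM, 0, -M], [0, M, K^T], [-M, K, 0]] is nonsingular. -/

import Mathlib

open Matrix

/-- A 3×3 block matrix with square m×m blocks. -/
def blk3 {R : Type*} (m : ℕ)
    (A B C D E F G H I : Matrix (Fin m) (Fin m) R) :
    Matrix (Fin m ⊕ (Fin m ⊕ Fin m)) (Fin m ⊕ (Fin m ⊕ Fin m)) R :=
  Matrix.of <|
    Sum.elim (fun i => Sum.elim (A i) (Sum.elim (B i) (C i)))
      (Sum.elim (fun i => Sum.elim (D i) (Sum.elim (E i) (F i)))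
        (fun i => Sum.elim (G i) (Sum.elim (H i) (I i))))

/-- A block vector with three m-blocks. -/
def vec3 {R : Type*} {m : ℕ} (x y z : Fin m → R) : Fin m ⊕ (Fin m ⊕ Fin m) → R :=
  Sum.elim x (Sum.elim y z)

lemma blk3_mulVec {m : ℕ} (A B C D E F G H I : Matrix (Fin m) (Fin m) ℝ)
    (x y z : Fin m → ℝ) :
    (blk3 m A B C D E F G H I) *ᵥ (vec3 x y z) =
      vec3 (A *ᵥ x + B *ᵥ y + C *ᵥ z) (D *ᵥ x + E *ᵥ y + F *ᵥ z)
        (G *ᵥ x + H *ᵥ y + I *ᵥ z) := by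
  funext i
  rcases i with i | i | i <;>
    simp [blk3, vec3, Matrix.mulVec, dotProduct, Fintype.sum_sum_type,
      Finset.sum_add_distrib, add_assoc]

lemma vec3_eq_zero {m : ℕ} {x y z : Fin m → ℝ} (h : vec3 x y z = 0) :
    x = 0 ∧ y = 0 ∧ z = 0 := by
  refine ⟨funext fun i => congrFun h (Sum.inl i),
    funext fun i => congrFun h (Sum.inr (Sum.inl i)),
    funext fun i => congrFun h (Sum.inr (Sum.inr i))⟩

theorem stmt_10 {m : ℕ} (M K : Matrix (Fin m) (Fin m) ℝ)
    (hM : M.PosDef) (hK : IsUnit K) (β : ℝ) (hβ : 0 < β) :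
    IsUnit (blk3 m ((2 * β) • M) 0 (-M) 0 M Kᵀ (-M) K 0) := by
  rw [← Matrix.mulVec_injective_iff_isUnit]
  change Function.Injective (Matrix.mulVecLin _)
  rw [← LinearMap.ker_eq_bot, LinearMap.ker_eq_bot']
  intro c hc
  have hMT : Mᵀ = M := by
    have := hM.1
    simpa [Matrix.IsHermitian, Matrix.conjTranspose_eq_transpose_of_trivial] using this
  set x : Fin m → ℝ := fun i => c (Sum.inl i) with hx
  set y : Fin m → ℝ := fun i => c (Sum.inr (Sum.inl i)) with hy
  set z : Fin m → ℝ := fun i => c (Sum.inr (Sum.inr i)) with hz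
  have hcv : c = vec3 x y z := by
    funext i; rcases i with i | i | i <;> rfl
  have hc' : (blk3 m ((2 * β) • M) 0 (-M) 0 M Kᵀ (-M) K 0) *ᵥ (vec3 x y z) = 0 := by
    rw [← hcv]; exact hc
  rw [blk3_mulVec] at hc'
  obtain ⟨e1, e2, e3⟩ := vec3_eq_zero hc'
  simp only [Matrix.zero_mulVec, Matrix.neg_mulVec, add_zero, zero_add] at e1 e2 e3
  -- e1 : (2β)•M *ᵥ x - M *ᵥ z = 0,  e2 : M *ᵥ y + Kᵀ *ᵥ z = 0,  e3 : -(M*ᵥx) + K*ᵥy = 0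
  have hKy : K *ᵥ y = M *ᵥ x := by
    have := congrArg (fun v => v + M *ᵥ x) e3
    simpa [add_comm, add_assoc, add_left_comm] using this
  have hMz : M *ᵥ z = (2 * β) • (M *ᵥ x) := by
    have := congrArg (fun v => v + M *ᵥ z) e1
    simpa [Matrix.smul_mulVec, add_comm, add_assoc, add_left_comm] using this.symm
  have hKey : y ⬝ᵥ (M *ᵥ y) = -((2 * β) * (x ⬝ᵥ (M *ᵥ x))) := by
    have h2 : y ⬝ᵥ (M *ᵥ y) = -(y ⬝ᵥ (Kᵀ *ᵥ z)) := by
      have := congrArg (fun v => y ⬝ᵥ v) e2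
      simp only [dotProduct_add, dotProduct_zero] at this
      linarith
    rw [h2]
    have h3 : y ⬝ᵥ (Kᵀ *ᵥ z) = (K *ᵥ y) ⬝ᵥ z := by
      rw [Matrix.dotProduct_mulVec, Matrix.vecMul_transpose]
    have hvm : x ᵥ* M = M *ᵥ x := by
      conv_lhs => rw [← hMT]
      rw [Matrix.vecMul_transpose]
    have h4 : x ⬝ᵥ (M *ᵥ z) = (M *ᵥ x) ⬝ᵥ z := by
      rw [Matrix.dotProduct_mulVec, hvm]
    rw [h3, hKy, h4.symm, hMz]
    simp [dotProduct_smul, smul_eq_mul]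
  have hxMx : (0:ℝ) ≤ x ⬝ᵥ (M *ᵥ x) := by
    have := hM.posSemidef.dotProduct_mulVec_nonneg x; simpa using this
  have hyMy : (0:ℝ) ≤ y ⬝ᵥ (M *ᵥ y) := by
    have := hM.posSemidef.dotProduct_mulVec_nonneg y; simpa using this
  have hx0 : x = 0 := by
    by_contra hx0
    have := hM.dotProduct_mulVec_pos hx0
    simp only [star_trivial] at this
    nlinarith
  have hy0 : y = 0 := by
    by_contra hy0
    have := hM.dotProduct_mulVec_pos hy0
    simp only [star_trivial] at this
    rw [hKey, hx0] at this
    simp at this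
  have hz0 : z = 0 := by
    by_contra hz0
    have hpos := hM.dotProduct_mulVec_pos hz0
    simp only [star_trivial] at hpos
    rw [hMz, hx0] at hpos
    simp at hpos
  rw [hcv, hx0, hy0, hz0]
  funext i
  rcases i with i | i | i <;> simp [vec3]
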